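/- For all real numbers z ≥ y ≥ 1 and 0 < α ≤ 1, one has (y z^α - y + 1)^{1/α} - (y(z-1)^α - y + 1)^{1/α} ≥ 1. -/

import Mathlib

open Real

theorem stmt_1 (α y z : ℝ) (hα0 : 0 < α) (hα1 : α ≤ 1)
    (hy : 1 ≤ y) (hyz : y ≤ z) :
    (y * z ^ α - y + 1) ^ (1 / α) - (y * (z - 1) ^ α - y + 1) ^ (1 / α) ≥ 1 := by
  have hα : α ≠ 0 := ne_of_gt hα0
  have hz1 : (1:ℝ) ≤ z := hy.trans hyz
  have hz0 : (0:ℝ) ≤ z - 1 := by linarith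
  set c : ℝ := (z - 1) ^ α with hc
  set d : ℝ := z ^ α with hd
  have hc0 : 0 ≤ c := Real.rpow_nonneg hz0 α
  have hd1 : 1 ≤ d := Real.one_le_rpow hz1 hα0.le
  have hcd : c ≤ d := Real.rpow_le_rpow hz0 (by linarith) hα0.le
  have hp1 : (1:ℝ) ≤ 1 / α := by rw [le_div_iff₀ hα0]; linarith
  have hp0 : (0:ℝ) < 1 / α := by positivity
  -- B(y) ≥ 0
  have hBy : 0 ≤ y * c - y + 1 := by
    have h1 : (y - 1) ^ α ≤ c := Real.rpow_le_rpow (by linarith) (by linarith) hα0.le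
    have key : y - 1 ≤ y * (y - 1) ^ α := by
      rcases eq_or_lt_of_le (show (0:ℝ) ≤ y - 1 by linarith) with h0 | h0
      · rw [← h0, Real.zero_rpow hα]
        simp
      rcases le_or_gt y 2 with h | h
      · have hb : y - 1 ≤ (y - 1) ^ α := by
          calc y - 1 = (y - 1) ^ (1:ℝ) := (Real.rpow_one _).symm
            _ ≤ (y - 1) ^ α := Real.rpow_le_rpow_of_exponent_ge h0 (by linarith) hα1
        nlinarith
      · have hb : (1:ℝ) ≤ (y - 1) ^ α := Real.one_le_rpow (by linarith) hα0.le
        nlinarith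
    nlinarith
  set G : ℝ → ℝ := fun w => (w * d - w + 1) ^ (1/α) - (w * c - w + 1) ^ (1/α) with hGdef
  have hderiv : ∀ w : ℝ, HasDerivAt G
      ((d - 1) * (1/α) * (w * d - w + 1) ^ (1/α - 1)
        - (c - 1) * (1/α) * (w * c - w + 1) ^ (1/α - 1)) w := by
    intro w
    have hA : HasDerivAt (fun w : ℝ => w * d - w + 1) (d - 1) w := by
      have h := (((hasDerivAt_id w).mul_const d).sub (hasDerivAt_id w)).add_const 1
      simpa using h
    have hB : HasDerivAt (fun w : ℝ => w * c - w + 1) (c - 1) w := by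
      have h := (((hasDerivAt_id w).mul_const c).sub (hasDerivAt_id w)).add_const 1
      simpa using h
    exact (hA.rpow_const (Or.inr hp1)).sub (hB.rpow_const (Or.inr hp1))
  have mono : MonotoneOn G (Set.Icc 1 y) := by
    apply monotoneOn_of_deriv_nonneg (convex_Icc 1 y)
    · exact fun w _ => (hderiv w).continuousAt.continuousWithinAt
    · exact fun w _ => (hderiv w).differentiableAt.differentiableWithinAt
    · intro w hw
      rw [interior_Icc] at hw
      rw [(hderiv w).deriv]
      have hw1 : 1 ≤ w := hw.1.le
      have hwy : w ≤ y := hw.2.le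
      have hA0 : 0 ≤ w * d - w + 1 := by nlinarith
      have hB0 : 0 ≤ w * c - w + 1 := by
        rcases le_or_gt c 1 with h | h
        · nlinarith
        · nlinarith
      have hXA : 0 ≤ (w * d - w + 1) ^ (1/α - 1) := Real.rpow_nonneg hA0 _
      have hXB : 0 ≤ (w * c - w + 1) ^ (1/α - 1) := Real.rpow_nonneg hB0 _
      rcases le_or_gt c 1 with h | h
      · have t1 : 0 ≤ (d - 1) * ((1/α) * (w * d - w + 1) ^ (1/α - 1)) :=
          mul_nonneg (by linarith) (mul_nonneg hp0.le hXA)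
        have t2 : (c - 1) * ((1/α) * (w * c - w + 1) ^ (1/α - 1)) ≤ 0 :=
          mul_nonpos_of_nonpos_of_nonneg (by linarith) (mul_nonneg hp0.le hXB)
        nlinarith
      · have hBA : w * c - w + 1 ≤ w * d - w + 1 := by nlinarith
        have hXY : (w * c - w + 1) ^ (1/α - 1) ≤ (w * d - w + 1) ^ (1/α - 1) :=
          Real.rpow_le_rpow hB0 hBA (by linarith)
        have t1 : 0 ≤ ((d - c) * (1/α)) * (w * d - w + 1) ^ (1/α - 1) :=
          mul_nonneg (mul_nonneg (by linarith) hp0.le) hXA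
        have t2 : 0 ≤ ((c - 1) * (1/α)) *
            ((w * d - w + 1) ^ (1/α - 1) - (w * c - w + 1) ^ (1/α - 1)) :=
          mul_nonneg (mul_nonneg (by linarith) hp0.le) (by linarith)
        nlinarith
  have key := mono (Set.mem_Icc.2 ⟨le_refl 1, hy⟩) (Set.mem_Icc.2 ⟨hy, le_refl y⟩) hy
  have hG1 : G 1 = 1 := by
    have e1 : (1 * d - 1 + 1 : ℝ) = d := by ring
    have e2 : (1 * c - 1 + 1 : ℝ) = c := by ring
    simp only [hGdef, e1, e2, hc, hd, one_div, one_mul, sub_add_cancel]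
    rw [Real.rpow_rpow_inv (by linarith) hα, Real.rpow_rpow_inv hz0 hα]
    ring
  have hGy : G y = (y * d - y + 1) ^ (1/α) - (y * c - y + 1) ^ (1/α) := rfl
  have hGy : G y = (y * d - y + 1) ^ (1/α) - (y * c - y + 1) ^ (1/α) := rfl
  rw [ge_iff_le, ← hGy, ← hG1]
  exact key
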